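/- Let A be a metric space of actions, γ ∈ [0,1), λ ∈ [0,1], ε_a ≥ 0, K_Q ≥ 0, and fix a state s with nonempty finite action subsets β̂(s) ⊆ β̃(s) ⊆ A. Let Q_In : A → ℝ be any function (the in-sample optimal Q-values at s), and let Q̂ : A → ℝ be K_Q-Lipschitz (|Q̂(a₁) − Q̂(a₂)| ≤ K_Q·dist(a₁,a₂) for all a₁, a₂) and satisfy the sandwich bound Q_In(a) ≤ Q̂(a) ≤ Q_In(a) + λ·ε_a·K_Q·γ/(1−γ) for every a ∈ β̂(s). Suppose â ∈ β̃(s) maximizes Q̂ over β̃(s) (Q̂(â) ≥ Q̂(a) for all a ∈ β̃(s)), and a_in ∈ β̂(s) satisfies dist(â, a_in) ≤ ε_a. Then max_{a∈β̂(s)} Q_In(a) − Q_In(a_in) ≤ K_Q·ε_a·(1 − γ + λγ)/(1 − γ); in particular, if ε_a < (1−γ)·(max_{a∈β̂(s)} Q_In(a) − Q_In(a'))/(K_Q·(1−γ+λγ)) for every non-maximizer a' ∈ β̂(s) of Q_In, then a_in is a maximizer of Q_In over β̂(s). -/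

import Mathlib

/-- Near-optimality of the in-sample neighbor of the DMG greedy action: the in-sample
optimal value gap at `a_in` is at most `K_Q·ε_a·(1−γ+λγ)/(1−γ)`; in particular, if `ε_a` is
small enough relative to every nonzero gap, then `a_in` maximizes `Q_In` over `β̂(s)`. -/
theorem dmg_greedy_neighbor_near_optimal
    {A : Type*} [MetricSpace A]
    (γ lam εa K_Q : ℝ)
    (hγ0 : 0 ≤ γ) (hγ1 : γ < 1) (hlam0 : 0 ≤ lam) (hlam1 : lam ≤ 1)
    (hεa : 0 ≤ εa) (hKQ : 0 ≤ K_Q)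
    (βhat βtil : Finset A) (hβhat : βhat.Nonempty) (hβtil : βtil.Nonempty)
    (hsub : βhat ⊆ βtil)
    (QIn Qhat : A → ℝ)
    (hQhatLip : ∀ a₁ a₂, |Qhat a₁ - Qhat a₂| ≤ K_Q * dist a₁ a₂)
    (hsandwich : ∀ a ∈ βhat,
      QIn a ≤ Qhat a ∧ Qhat a ≤ QIn a + lam * εa * K_Q * γ / (1 - γ))
    (ahat : A) (hahat : ahat ∈ βtil) (hgreedy : ∀ a ∈ βtil, Qhat a ≤ Qhat ahat)
    (ain : A) (hain : ain ∈ βhat) (hdist : dist ahat ain ≤ εa) :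
    βhat.sup' hβhat QIn - QIn ain ≤ K_Q * εa * (1 - γ + lam * γ) / (1 - γ) ∧
    ((∀ a' ∈ βhat, QIn a' < βhat.sup' hβhat QIn →
        εa < (1 - γ) * (βhat.sup' hβhat QIn - QIn a') / (K_Q * (1 - γ + lam * γ))) →
      ∀ a ∈ βhat, QIn a ≤ QIn ain) := by
  have hγpos : 0 < 1 - γ := by linarith
  set M := βhat.sup' hβhat QIn with hM
  -- M ≤ Qhat ahat
  have hMle : M ≤ Qhat ahat := by
    apply Finset.sup'_le
    intro a ha
    exact le_trans (hsandwich a ha).1 (hgreedy a (hsub ha))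
  have hLip := hQhatLip ahat ain
  have h1 : Qhat ahat ≤ Qhat ain + K_Q * εa := by
    have := abs_le.mp hLip
    have hKd : K_Q * dist ahat ain ≤ K_Q * εa := by
      exact mul_le_mul_of_nonneg_left hdist hKQ
    linarith [this.2]
  have h2 := (hsandwich ain hain).2
  have hmain : M - QIn ain ≤ K_Q * εa * (1 - γ + lam * γ) / (1 - γ) := by
    have : M - QIn ain ≤ K_Q * εa + lam * εa * K_Q * γ / (1 - γ) := by linarith
    have heq : K_Q * εa * (1 - γ + lam * γ) / (1 - γ)
        = K_Q * εa + lam * εa * K_Q * γ / (1 - γ) := by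
      field_simp
    linarith [heq ▸ this]
  refine ⟨hmain, ?_⟩
  intro hgap a ha
  have haM : QIn a ≤ M := Finset.le_sup' QIn ha
  by_contra h
  push_neg at h
  have hainlt : QIn ain < M := lt_of_lt_of_le h haM
  have hε := hgap ain hain hainlt
  by_cases hK0 : K_Q * (1 - γ + lam * γ) = 0
  · rw [hK0, div_zero] at hε
    linarith
  · have hden : 0 < 1 - γ + lam * γ := by nlinarith
    have hKpos : 0 < K_Q := by
      rcases lt_or_eq_of_le hKQ with h' | h'
      · exact h'
      · exfalso; apply hK0; rw [← h']; ring
    have hKd : 0 < K_Q * (1 - γ + lam * γ) := mul_pos hKpos hden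
    rw [lt_div_iff₀ hKd] at hε
    have hmain' := (le_div_iff₀ hγpos).mp hmain
    nlinarith
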